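/- Let n ≥ k ≥ 1. Any hereditary k-fold banned binary sequence problem of length n has at most ∑_{i=0}^{k−1} C(n,i) solutions. -/

import Mathlib

/-- The common extension `X ∧ Z` of `X : [n]∖S → {0,1}` and `Z : S → {0,1}`. -/
def mergeSeq (n : ℕ) (S : Finset (Fin n)) (X : {i : Fin n // i ∉ S} → Bool)
    (Z : {i : Fin n // i ∈ S} → Bool) : Fin n → Bool :=
  fun i => if h : i ∈ S then Z ⟨i, h⟩ else X ⟨i, h⟩

/-- `Y` is a solution to the `k`-fold banned binary sequence problem `f` of length `n`. -/
def IsSolution (n k : ℕ)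
    (f : (S : Finset (Fin n)) → ({i : Fin n // i ∉ S} → Bool) →
      Set ({i : Fin n // i ∈ S} → Bool))
    (Y : Fin n → Bool) : Prop :=
  ∀ S : Finset (Fin n), S.card = k →
    (fun i : {i : Fin n // i ∈ S} => Y i.1) ∉ f S (fun i => Y i.1)

/-- A `k`-fold banned binary sequence problem `f` of length `n` is hereditary unless there is a
`k`-element subset `S` of `[n]` such that for each `Z_α : S → {0,1}` there is
`X_α : [n]∖S → {0,1}` with `Z_α ∉ f(S, X_α)`, and additionally, for `Z_α ≠ Z_β` the first
(least) index at which `X_α ∧ Z_α` and `X_β ∧ Z_β` differ lies in `S`. -/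
def Hereditary (n k : ℕ)
    (f : (S : Finset (Fin n)) → ({i : Fin n // i ∉ S} → Bool) →
      Set ({i : Fin n // i ∈ S} → Bool)) : Prop :=
  ¬ ∃ S : Finset (Fin n), S.card = k ∧
      ∃ X : ({i : Fin n // i ∈ S} → Bool) → ({i : Fin n // i ∉ S} → Bool),
        (∀ Z, Z ∉ f S (X Z)) ∧
        (∀ Z₁ Z₂, Z₁ ≠ Z₂ → ∀ i : Fin n,
          (∀ j : Fin n, j < i → mergeSeq n S (X Z₁) Z₁ j = mergeSeq n S (X Z₂) Z₂ j) →
          mergeSeq n S (X Z₁) Z₁ i ≠ mergeSeq n S (X Z₂) Z₂ i → i ∈ S)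

open Finset

/-- `A` tree-shatters `S`. -/
def TS (A : Finset (List Bool)) (S : Finset ℕ) : Prop :=
  ∃ Y : (ℕ → Bool) → List Bool,
    (∀ z, Y z ∈ A) ∧
    (∀ z, ∀ s ∈ S, (Y z)[s]? = some (z s)) ∧
    (∀ z₁ z₂ i, (∀ j < i, (Y z₁)[j]? = (Y z₂)[j]?) →
      (Y z₁)[i]? ≠ (Y z₂)[i]? → i ∈ S)

lemma TS_mono {A : Finset (List Bool)} {S S' : Finset ℕ} (h : TS A S) (hsub : S' ⊆ S) :
    TS A S' := by
  obtain ⟨Y, hmem, hget, hdiff⟩ := h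
  classical
  refine ⟨fun z => Y (fun i => if i ∈ S' then z i else false), fun z => hmem _, ?_, ?_⟩
  · intro z s hs
    rw [hget _ s (hsub hs)]
    simp [hs]
  · intro z₁ z₂ i hpre hne
    have hi := hdiff _ _ i hpre hne
    have h1 := hget (fun i => if i ∈ S' then z₁ i else false) i hi
    have h2 := hget (fun i => if i ∈ S' then z₂ i else false) i hi
    by_contra hi'
    rw [h1, h2] at hne
    simp [hi'] at hne

def subA (b : Bool) (A : Finset (List Bool)) : Finset (List Bool) :=
  (A.filter (fun l => l.head? = some b)).image List.tail

lemma head?_eq_cons {l : List Bool} {b : Bool} (h : l.head? = some b) : l = b :: l.tail := by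
  cases l with
  | nil => simp at h
  | cons a t => simp at h; simp [h]

lemma mem_subA {n : ℕ} {A : Finset (List Bool)} (hA : ∀ l ∈ A, l.length = n + 1)
    {b : Bool} {l : List Bool} : l ∈ subA b A ↔ b :: l ∈ A := by
  constructor
  · intro h
    obtain ⟨l', hl', htl⟩ := Finset.mem_image.mp h
    rw [Finset.mem_filter] at hl'
    have := head?_eq_cons hl'.2
    rw [← htl, ← this]
    exact hl'.1
  · intro h
    exact Finset.mem_image.mpr ⟨b :: l, Finset.mem_filter.mpr ⟨h, rfl⟩, rfl⟩

lemma card_subA {n : ℕ} {A : Finset (List Bool)} (hA : ∀ l ∈ A, l.length = n + 1) :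
    A.card = (subA false A).card + (subA true A).card := by
  classical
  have hinj : ∀ b : Bool, Set.InjOn List.tail ((A.filter (fun l => l.head? = some b) : Finset (List Bool)) : Set (List Bool)) := by
    intro b l₁ h₁ l₂ h₂ htl
    rw [Finset.coe_filter, Set.mem_setOf_eq] at h₁ h₂
    rw [head?_eq_cons h₁.2, head?_eq_cons h₂.2, htl]
  have hc : ∀ b : Bool, (subA b A).card = (A.filter (fun l => l.head? = some b)).card := by
    intro b; exact Finset.card_image_of_injOn (hinj b)
  rw [hc, hc]
  rw [← Finset.card_filter_add_card_filter_not
    (p := fun l => l.head? = some false) (s := A)]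
  congr 1
  apply congrArg
  apply Finset.filter_congr
  intro l hl
  have : l.length = n + 1 := hA l hl
  cases l with
  | nil => simp at this
  | cons a t => cases a <;> simp

lemma TS_shift {n : ℕ} {A : Finset (List Bool)} (hA : ∀ l ∈ A, l.length = n + 1)
    {b : Bool} {S : Finset ℕ} (h : TS (subA b A) S) :
    TS A (S.image (· + 1)) := by
  obtain ⟨Y, hmem, hget, hdiff⟩ := h
  refine ⟨fun z => b :: Y (fun i => z (i + 1)), fun z => (mem_subA hA).mp (hmem _), ?_, ?_⟩
  · intro z s hs
    obtain ⟨t, ht, rfl⟩ := Finset.mem_image.mp hs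
    simpa using hget (fun i => z (i + 1)) t ht
  · intro z₁ z₂ i hpre hne
    match i with
    | 0 => simp at hne
    | (j + 1) =>
      have := hdiff (fun i => z₁ (i + 1)) (fun i => z₂ (i + 1)) j
        (fun m hm => by simpa using hpre (m + 1) (by omega)) (by simpa using hne)
      exact Finset.mem_image.mpr ⟨j, this, rfl⟩

lemma TS_insert {n : ℕ} {A : Finset (List Bool)} (hA : ∀ l ∈ A, l.length = n + 1)
    {S : Finset ℕ} (h0 : TS (subA false A) S) (h1 : TS (subA true A) S) :
    TS A (insert 0 (S.image (· + 1))) := by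
  obtain ⟨Y0, hmem0, hget0, hdiff0⟩ := h0
  obtain ⟨Y1, hmem1, hget1, hdiff1⟩ := h1
  classical
  set Yb : Bool → (ℕ → Bool) → List Bool := fun b => if b then Y1 else Y0 with hYb
  have hmemb : ∀ b z, Yb b z ∈ subA b A := by intro b z; cases b <;> simp [hYb, hmem0, hmem1]
  have hgetb : ∀ b z, ∀ s ∈ S, (Yb b z)[s]? = some (z s) := by
    intro b; cases b
    · exact hget0
    · exact hget1
  have hdiffb : ∀ b z₁ z₂ i, (∀ j < i, (Yb b z₁)[j]? = (Yb b z₂)[j]?) →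
      (Yb b z₁)[i]? ≠ (Yb b z₂)[i]? → i ∈ S := by
    intro b; cases b
    · exact hdiff0
    · exact hdiff1
  refine ⟨fun z => z 0 :: Yb (z 0) (fun i => z (i + 1)),
    fun z => (mem_subA hA).mp (hmemb _ _), ?_, ?_⟩
  · intro z s hs
    rcases Finset.mem_insert.mp hs with rfl | hs
    · simp
    · obtain ⟨t, ht, rfl⟩ := Finset.mem_image.mp hs
      simpa using hgetb (z 0) (fun i => z (i + 1)) t ht
  · intro z₁ z₂ i hpre hne
    match i with
    | 0 => exact Finset.mem_insert_self 0 _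
    | (j + 1) =>
      have h00 : z₁ 0 = z₂ 0 := by
        have := hpre 0 (by omega); simpa using this
      have := hdiffb (z₂ 0) (fun i => z₁ (i + 1)) (fun i => z₂ (i + 1)) j
        (fun m hm => by simpa [h00] using hpre (m + 1) (by omega)) (by simpa [h00] using hne)
      exact Finset.mem_insert.mpr (Or.inr (Finset.mem_image.mpr ⟨j, this, rfl⟩))

set_option maxHeartbeats 1000000 in
open scoped Classical in
lemma TS_count : ∀ (n : ℕ) (A : Finset (List Bool)), (∀ l ∈ A, l.length = n) →
    A.card ≤ ((Finset.range n).powerset.filter (fun S => TS A S)).card := by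
  intro n
  induction n with
  | zero =>
    intro A hA
    rcases A.eq_empty_or_nonempty with rfl | ⟨a, ha⟩
    · simp
    · have h1 : A.card ≤ 1 := by
        apply Finset.card_le_one.mpr
        intro x hx y hy
        have := hA x hx; have := hA y hy
        rw [List.length_eq_zero_iff.mp (hA x hx), List.length_eq_zero_iff.mp (hA y hy)]
      refine le_trans h1 ?_
      rw [Nat.one_le_iff_ne_zero, ← Nat.pos_iff_ne_zero, Finset.card_pos]
      refine ⟨∅, Finset.mem_filter.mpr ⟨by simp, ⟨fun _ => a, fun _ => ha, by simp, ?_⟩⟩⟩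
      intro z₁ z₂ i hpre hne
      exact absurd rfl hne
  | succ n ih =>
    intro A hA
    have hc := card_subA hA
    have hlen : ∀ b : Bool, ∀ l ∈ subA b A, l.length = n := by
      intro b l hl
      have := hA _ ((mem_subA hA).mp hl)
      simpa using this
    have h0 := ih (subA false A) (hlen false)
    have h1 := ih (subA true A) (hlen true)
    set F0 := ((Finset.range n).powerset.filter (fun S => TS (subA false A) S)) with hF0
    set F1 := ((Finset.range n).powerset.filter (fun S => TS (subA true A) S)) with hF1
    set F := ((Finset.range (n+1)).powerset.filter (fun S => TS A S)) with hF
    -- maps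
    have hsub1 : ((F0 ∪ F1).image (fun S => S.image (· + 1))) ⊆ F := by
      intro T hT
      obtain ⟨S, hS, rfl⟩ := Finset.mem_image.mp hT
      have hSr : S ⊆ Finset.range n := by
        rcases Finset.mem_union.mp hS with h | h
        · exact Finset.mem_powerset.mp (Finset.mem_filter.mp h).1
        · exact Finset.mem_powerset.mp (Finset.mem_filter.mp h).1
      refine Finset.mem_filter.mpr ⟨Finset.mem_powerset.mpr ?_, ?_⟩
      · intro t ht
        obtain ⟨s, hs, rfl⟩ := Finset.mem_image.mp ht
        have := Finset.mem_range.mp (hSr hs)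
        exact Finset.mem_range.mpr (by omega)
      · rcases Finset.mem_union.mp hS with h | h
        · exact TS_shift hA (Finset.mem_filter.mp h).2
        · exact TS_shift hA (Finset.mem_filter.mp h).2
    have hsub2 : ((F0 ∩ F1).image (fun S => insert 0 (S.image (· + 1)))) ⊆ F := by
      intro T hT
      obtain ⟨S, hS, rfl⟩ := Finset.mem_image.mp hT
      have h0' := Finset.mem_filter.mp (Finset.mem_inter.mp hS).1
      have h1' := Finset.mem_filter.mp (Finset.mem_inter.mp hS).2
      refine Finset.mem_filter.mpr ⟨Finset.mem_powerset.mpr ?_, TS_insert hA h0'.2 h1'.2⟩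
      intro t ht
      rcases Finset.mem_insert.mp ht with rfl | ht
      · exact Finset.mem_range.mpr (by omega)
      · obtain ⟨s, hs, rfl⟩ := Finset.mem_image.mp ht
        have := Finset.mem_range.mp (Finset.mem_powerset.mp h0'.1 hs)
        exact Finset.mem_range.mpr (by omega)
    have hinj1 : Set.InjOn (fun S : Finset ℕ => S.image (· + 1)) ↑(F0 ∪ F1) := by
      intro S₁ _ S₂ _ h
      exact Finset.image_injective (fun a b hab => by omega) h
    have hinj2 : Set.InjOn (fun S : Finset ℕ => insert 0 (S.image (· + 1))) ↑(F0 ∩ F1) := by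
      intro S₁ _ S₂ _ h
      have h0i : ∀ S : Finset ℕ, (0 : ℕ) ∉ S.image (· + 1) := by
        intro S h; obtain ⟨s, _, hs⟩ := Finset.mem_image.mp h; omega
      have := congrArg (fun T => Finset.erase T 0) h
      simp only [Finset.erase_insert (h0i S₁), Finset.erase_insert (h0i S₂)] at this
      exact Finset.image_injective (fun a b hab => by omega) this
    have hdisj : Disjoint ((F0 ∪ F1).image (fun S => S.image (· + 1)))
        ((F0 ∩ F1).image (fun S => insert 0 (S.image (· + 1)))) := by
      rw [Finset.disjoint_left]
      intro T hT1 hT2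
      obtain ⟨S₁, _, rfl⟩ := Finset.mem_image.mp hT1
      obtain ⟨S₂, _, he⟩ := Finset.mem_image.mp hT2
      have : (0:ℕ) ∈ S₁.image (· + 1) := he ▸ Finset.mem_insert_self 0 _
      obtain ⟨s, _, hs⟩ := Finset.mem_image.mp this
      omega
    calc A.card = (subA false A).card + (subA true A).card := hc
      _ ≤ F0.card + F1.card := Nat.add_le_add h0 h1
      _ = (F0 ∪ F1).card + (F0 ∩ F1).card := (Finset.card_union_add_card_inter F0 F1).symm
      _ = ((F0 ∪ F1).image (fun S => S.image (· + 1))).card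
          + ((F0 ∩ F1).image (fun S => insert 0 (S.image (· + 1)))).card := by
          rw [Finset.card_image_of_injOn hinj1, Finset.card_image_of_injOn hinj2]
      _ = (((F0 ∪ F1).image (fun S => S.image (· + 1)))
          ∪ ((F0 ∩ F1).image (fun S => insert 0 (S.image (· + 1))))).card :=
          (Finset.card_union_of_disjoint hdisj).symm
      _ ≤ F.card := Finset.card_le_card (Finset.union_subset hsub1 hsub2)

open scoped Classical in
lemma TS_bound (n k : ℕ) (A : Finset (List Bool)) (hA : ∀ l ∈ A, l.length = n)
    (hlt : ∀ S : Finset ℕ, S ⊆ Finset.range n → TS A S → S.card < k) :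
    A.card ≤ ∑ i ∈ Finset.range k, n.choose i := by
  refine le_trans (TS_count n A hA) ?_
  have hsub : ((Finset.range n).powerset.filter (fun S => TS A S)) ⊆
      (Finset.range k).biUnion (fun i => (Finset.range n).powersetCard i) := by
    intro S hS
    have h := Finset.mem_filter.mp hS
    have hr := Finset.mem_powerset.mp h.1
    exact Finset.mem_biUnion.mpr ⟨S.card, Finset.mem_range.mpr (hlt S hr h.2),
      Finset.mem_powersetCard.mpr ⟨hr, rfl⟩⟩
  refine le_trans (Finset.card_le_card hsub) ?_
  refine le_trans (Finset.card_biUnion_le) ?_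
  apply Finset.sum_le_sum
  intro i _
  rw [Finset.card_powersetCard, Finset.card_range]


/-- Any hereditary `k`-fold banned binary sequence problem of length `n` (with `n ≥ k ≥ 1`)
has at most `∑_{i=0}^{k−1} C(n,i)` solutions. -/
theorem hereditary_bbsp_card_solutions_le (n k : ℕ) (hk : 1 ≤ k) (hkn : k ≤ n)
    (f : (S : Finset (Fin n)) → ({i : Fin n // i ∉ S} → Bool) →
      Set ({i : Fin n // i ∈ S} → Bool))
    (hne : ∀ (S : Finset (Fin n)) (X : {i : Fin n // i ∉ S} → Bool),
      S.card = k → (f S X).Nonempty)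
    (hher : Hereditary n k f) :
    {Y : Fin n → Bool | IsSolution n k f Y}.ncard ≤
      ∑ i ∈ Finset.range k, n.choose i := by
  classical
  set T : Finset (Fin n → Bool) := Finset.univ.filter (fun Y => IsSolution n k f Y) with hT
  have hset : {Y : Fin n → Bool | IsSolution n k f Y} = ↑T := by
    ext Y; simp [hT]
  rw [hset, Set.ncard_coe_finset]
  set A : Finset (List Bool) := T.image List.ofFn with hAdef
  have hcardA : A.card = T.card := by
    apply Finset.card_image_of_injOn
    intro Y₁ _ Y₂ _ h
    exact List.ofFn_inj.mp h
  have hlen : ∀ l ∈ A, l.length = n := by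
    intro l hl
    obtain ⟨Y, _, rfl⟩ := Finset.mem_image.mp hl
    simp
  rw [← hcardA]
  apply TS_bound n k A hlen
  -- no tree-shattered set of size ≥ k
  intro S hSr hTS
  by_contra hge
  push_neg at hge
  obtain ⟨S₀, hS₀sub, hS₀card⟩ := Finset.exists_subset_card_eq hge
  have hTS₀ : TS A S₀ := TS_mono hTS hS₀sub
  have hS₀r : S₀ ⊆ Finset.range n := fun x hx => hSr (hS₀sub hx)
  -- build the non-hereditary witness
  obtain ⟨Y, hmem, hget, hdiff⟩ := hTS₀
  set S' : Finset (Fin n) := S₀.attachFin (fun m hm => Finset.mem_range.mp (hS₀r hm)) with hS'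
  have hmemS' : ∀ i : Fin n, i ∈ S' ↔ i.val ∈ S₀ := by
    intro i; simp [hS', Finset.mem_attachFin]
  have hS'card : S'.card = k := by rw [hS', Finset.card_attachFin, hS₀card]
  -- for each Z : S' → Bool, an ℕ-valued extension
  set zf : ({i : Fin n // i ∈ S'} → Bool) → (ℕ → Bool) := fun Z m =>
    if h : m < n then (if h2 : (⟨m, h⟩ : Fin n) ∈ S' then Z ⟨⟨m, h⟩, h2⟩ else false) else false
    with hzf
  -- choose the solution behind Y (zf Z)
  have hex : ∀ Z : ({i : Fin n // i ∈ S'} → Bool), ∃ W : Fin n → Bool,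
      W ∈ T ∧ List.ofFn W = Y (zf Z) := by
    intro Z
    obtain ⟨W, hW, hW2⟩ := Finset.mem_image.mp (hmem (zf Z))
    exact ⟨W, hW, hW2⟩
  choose W hWT hWof using hex
  have hWget : ∀ Z (i : Fin n), (Y (zf Z))[i.val]? = some (W Z i) := by
    intro Z i
    rw [← hWof Z, List.getElem?_eq_getElem (by simp)]
    congr 1
    simp [List.get_ofFn]
  have hWS' : ∀ Z (i : Fin n) (h : i ∈ S'), W Z i = Z ⟨i, h⟩ := by
    intro Z i h
    have h1 := hWget Z i
    have h2 := hget (zf Z) i.val ((hmemS' i).mp h)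
    rw [h1] at h2
    have : zf Z i.val = Z ⟨i, h⟩ := by
      simp only [hzf]
      rw [dif_pos i.isLt, dif_pos (show (⟨i.val, i.isLt⟩ : Fin n) ∈ S' from h)]
    rw [← this]
    exact Option.some_injective _ h2
  set X : ({i : Fin n // i ∈ S'} → Bool) → ({i : Fin n // i ∉ S'} → Bool) :=
    fun Z i => W Z i.1 with hX
  have hmerge : ∀ Z, mergeSeq n S' (X Z) Z = W Z := by
    intro Z
    funext i
    unfold mergeSeq
    by_cases h : i ∈ S'
    · rw [dif_pos h, hWS' Z i h]
    · rw [dif_neg h]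
  apply hher
  refine ⟨S', hS'card, X, ?_, ?_⟩
  · intro Z
    have hsol : IsSolution n k f (W Z) := by
      have := hWT Z; rw [hT, Finset.mem_filter] at this; exact this.2
    have h1 := hsol S' hS'card
    have hZ : Z = fun i : {i : Fin n // i ∈ S'} => W Z i.1 := by
      funext i; exact (hWS' Z i.1 i.2).symm
    have h2 := h1
    rw [← hZ] at h2
    exact h2
  · intro Z₁ Z₂ hZne i hpre hne
    rw [hmerge Z₁, hmerge Z₂] at hpre hne
    have key : i.val ∈ S₀ := by
      apply hdiff (zf Z₁) (zf Z₂) i.val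
      · intro j hj
        have hjn : j < n := lt_trans hj i.isLt
        rw [hWget Z₁ ⟨j, hjn⟩, hWget Z₂ ⟨j, hjn⟩]
        exact congrArg some (hpre ⟨j, hjn⟩ hj)
      · rw [hWget Z₁ i, hWget Z₂ i]
        simpa using hne
    exact (hmemS' i).mpr key
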